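/- Let a ∈ ℂ \ {0}, f ≠ 0 arbitrary, d = 1 + 2a, g = -1 + i·a·√3 (or g = -1 - i·a·√3). With A, B, D defined as A = [[a, a-2, a-2], [-2a+1, d, -2a+1], [f, f, g]], B = [[a-2, -a+2, -a+2], [2a-1, -2a+1, 2a-1], [-f, -f, f]], D = [[-a+3, 3a-3, -a-1], [-a+2, 3a-2, -3a], [3, 2a-1, -2a-1]], assume a ∉ {-1, 0, 2, 1/2}, and let C be the unique matrix satisfying A²B - BCB - ABD + BD² = 0. Then the determinant of the block matrix S = [[A,B],[C,D]] equals 32(1 ± i√3)·a⁶; in particular S is invertible. -/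
import Mathlib


open Matrix Complex

theorem stmt_7 (a f : ℂ) (ha : a ≠ -1 ∧ a ≠ 0 ∧ a ≠ 2 ∧ a ≠ 1 / 2) (hf : f ≠ 0)
    (d g : ℂ) (hd : d = 1 + 2 * a)
    (hg : g = -1 + I * a * (Real.sqrt 3 : ℂ) ∨ g = -1 - I * a * (Real.sqrt 3 : ℂ))
    (A B D C : Matrix (Fin 3) (Fin 3) ℂ)
    (hA : A = !![a, a - 2, a - 2; -2 * a + 1, d, -2 * a + 1; f, f, g])
    (hB : B = !![a - 2, -a + 2, -a + 2; 2 * a - 1, -2 * a + 1, 2 * a - 1; -f, -f, f])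
    (hD : D = !![-a + 3, 3 * a - 3, -a - 1; -a + 2, 3 * a - 2, -3 * a; 3, 2 * a - 1, -2 * a - 1])
    (hC : C = B⁻¹ * (A ^ 2 * B - A * B * D + B * D ^ 2) * B⁻¹) :
    ((fromBlocks A B C D).det = 32 * (1 + I * (Real.sqrt 3 : ℂ)) * a ^ 6 ∨
      (fromBlocks A B C D).det = 32 * (1 - I * (Real.sqrt 3 : ℂ)) * a ^ 6) ∧
    IsUnit (fromBlocks A B C D) := by
  obtain ⟨ha1, ha0, ha2, hah⟩ := ha
  have hs3 : ((Real.sqrt 3 : ℝ) : ℂ) ^ 2 = 3 := by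
    rw [← Complex.ofReal_pow, Real.sq_sqrt (by norm_num : (0:ℝ) ≤ 3)]; norm_num
  have hIs : (I * ((Real.sqrt 3 : ℝ) : ℂ)) ^ 2 = -3 := by
    rw [mul_pow, Complex.I_sq, hs3]; ring
  -- determinant of B
  have hBdet : B.det = 4 * f * ((a - 2) * (2 * a - 1)) := by
    subst hB; rw [Matrix.det_fin_three]; simp; ring
  have h21 : 2 * a - 1 ≠ 0 := fun h => hah (by linear_combination h / 2)
  have hBne : B.det ≠ 0 := by
    rw [hBdet]
    exact mul_ne_zero (mul_ne_zero (by norm_num) hf)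
      (mul_ne_zero (sub_ne_zero_of_ne ha2) h21)
  have hu : IsUnit B.det := isUnit_iff_ne_zero.mpr hBne
  -- determinant of A*B - B*D
  have hKdet : (A * B - B * D).det =
      f * (32 * a ^ 2 - 112 * a ^ 3 + 112 * a ^ 4 - 32 * a ^ 5)
        + f * g * (32 * a ^ 2 - 80 * a ^ 3 + 32 * a ^ 4) := by
    subst hA hB hD hd
    rw [Matrix.det_fin_three]
    simp [Matrix.mul_apply, Fin.sum_univ_three, Matrix.sub_apply]
    ring
  -- key structural identity
  have h1 : B * B⁻¹ = 1 := Matrix.mul_nonsing_inv _ hu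
  have h2 : B⁻¹ * B = 1 := Matrix.nonsing_inv_mul _ hu
  have h1' : ∀ t : Matrix (Fin 3) (Fin 3) ℂ, B * (B⁻¹ * t) = t := fun t => by
    rw [← Matrix.mul_assoc, h1, Matrix.one_mul]
  have h2' : ∀ t : Matrix (Fin 3) (Fin 3) ℂ, B⁻¹ * (B * t) = t := fun t => by
    rw [← Matrix.mul_assoc, h2, Matrix.one_mul]
  have hBE : B * (C - D * B⁻¹ * A) * B = (A * B - B * D) * B⁻¹ * (A * B - B * D) := by
    rw [hC]
    simp only [Matrix.mul_sub, Matrix.sub_mul, Matrix.mul_assoc, h1', h2', h1, h2,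
      Matrix.mul_one, pow_two]
    abel
  have hdetBE : B.det * (C - D * B⁻¹ * A).det * B.det
      = (A * B - B * D).det * (B.det)⁻¹ * (A * B - B * D).det := by
    have := congrArg Matrix.det hBE
    rwa [Matrix.det_mul, Matrix.det_mul, Matrix.det_mul, Matrix.det_mul,
      Matrix.det_nonsing_inv, Ring.inverse_eq_inv'] at this
  have hMN : fromBlocks A B C D * fromBlocks 0 1 1 (-(B⁻¹ * A))
      = fromBlocks B 0 D (C - D * B⁻¹ * A) := by
    simp [Matrix.fromBlocks_multiply, h1', Matrix.mul_neg, sub_eq_add_neg, Matrix.mul_assoc]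
  have hswap : (fromBlocks 0 1 1 0 : Matrix (Fin 3 ⊕ Fin 3) (Fin 3 ⊕ Fin 3) ℂ).det = -1 := by
    have h : (fromBlocks 0 1 1 0 : Matrix (Fin 3 ⊕ Fin 3) (Fin 3 ⊕ Fin 3) ℂ)
        = (1 : Matrix (Fin 3 ⊕ Fin 3) (Fin 3 ⊕ Fin 3) ℂ).submatrix
            (Equiv.sumComm (Fin 3) (Fin 3)) id := by
      ext i j
      cases i <;> cases j <;> simp [Matrix.one_apply, Matrix.submatrix_apply, Matrix.fromBlocks]
    rw [h, Matrix.det_permute]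
    norm_num [show Equiv.Perm.sign (α := Fin 3 ⊕ Fin 3) (Equiv.sumComm (Fin 3) (Fin 3)) = -1
      from by decide]
  have hN : (fromBlocks (0 : Matrix (Fin 3) (Fin 3) ℂ) 1 1 (-(B⁻¹ * A))).det = -1 := by
    have hfac : fromBlocks (0 : Matrix (Fin 3) (Fin 3) ℂ) 1 1 (-(B⁻¹ * A))
        = fromBlocks 0 1 1 0 * fromBlocks 1 (-(B⁻¹ * A)) 0 1 := by
      simp [Matrix.fromBlocks_multiply]
    rw [hfac, Matrix.det_mul, Matrix.det_fromBlocks_zero₂₁, hswap]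
    simp
  have hM2 : (fromBlocks A B C D).det * (-1) = B.det * (C - D * B⁻¹ * A).det := by
    rw [← hN, ← Matrix.det_mul, hMN, Matrix.det_fromBlocks_zero₁₂]
  have hinv : (B.det)⁻¹ * B.det = 1 := inv_mul_cancel₀ hBne
  have key : (fromBlocks A B C D).det * B.det ^ 2 = -(((A * B - B * D).det) ^ 2) := by
    linear_combination (-(B.det ^ 2)) * hM2 - B.det * hdetBE
      - ((A * B - B * D).det) ^ 2 * hinv
  have hb2 : B.det ^ 2 ≠ 0 := pow_ne_zero _ hBne
  have hdet : (fromBlocks A B C D).det = 32 * (1 + I * (Real.sqrt 3 : ℂ)) * a ^ 6 ∨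
      (fromBlocks A B C D).det = 32 * (1 - I * (Real.sqrt 3 : ℂ)) * a ^ 6 := by
    rcases hg with hg | hg
    · left
      apply mul_right_cancel₀ hb2
      rw [key, hKdet, hg, hBdet]
      linear_combination ((-1024) * a ^ 6 * f ^ 2 + 5120 * a ^ 7 * f ^ 2
        - 8448 * a ^ 8 * f ^ 2 + 5120 * a ^ 9 * f ^ 2 - 1024 * a ^ 10 * f ^ 2) * hIs
    · right
      apply mul_right_cancel₀ hb2
      rw [key, hKdet, hg, hBdet]
      linear_combination ((-1024) * a ^ 6 * f ^ 2 + 5120 * a ^ 7 * f ^ 2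
        - 8448 * a ^ 8 * f ^ 2 + 5120 * a ^ 9 * f ^ 2 - 1024 * a ^ 10 * f ^ 2) * hIs
  refine ⟨hdet, ?_⟩
  rw [Matrix.isUnit_iff_isUnit_det, isUnit_iff_ne_zero]
  have h32 : (32 : ℂ) ≠ 0 := by norm_num
  have ha6 : a ^ 6 ≠ 0 := pow_ne_zero _ ha0
  rcases hdet with hdet | hdet <;> rw [hdet]
  · refine mul_ne_zero (mul_ne_zero h32 ?_) ha6
    intro h
    have := congrArg Complex.re h
    simp [Complex.add_re, Complex.mul_re] at this
  · refine mul_ne_zero (mul_ne_zero h32 ?_) ha6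
    intro h
    have := congrArg Complex.re h
    simp [Complex.sub_re, Complex.mul_re] at this
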